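/- Let p : 2^I → ℝ be a nonzero twisted Pfaffian map. Then the collection B = {S ⊆ I : p(S) ≠ 0} is a Δ-matroid, and moreover sign ∘ p is an oriented even Δ-matroid. -/
import Mathlib


/-- The Pfaffian of an `N × N` matrix (intended for skew-symmetric matrices):
`Pf(A) = ∑_{σ ∈ S'_N} sign(σ) ∏_{k=1}^{N/2} a_{σ(2k-1) σ(2k)}`, where `S'_N` is the
set of permutations `σ` of `{0, …, N-1}` such that `σ(2k)` is minimal among
`σ(2k), σ(2k+1), …, σ(N-1)` for each `k`.  It is `0` for odd `N` and `1` for `N = 0`. -/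
noncomputable def pfaffian {N : ℕ} (A : Matrix (Fin N) (Fin N) ℝ) : ℝ :=
  if h : 2 ∣ N then
    ∑ σ ∈ Finset.univ.filter
        (fun σ : Equiv.Perm (Fin N) =>
          ∀ p q : Fin N, 2 ∣ (p : ℕ) → p ≤ q → σ p ≤ σ q),
      ((Equiv.Perm.sign σ : ℤ) : ℝ) *
        ∏ k : Fin (N / 2),
          A (σ ⟨2 * (k : ℕ), by have := k.2; omega⟩)
            (σ ⟨2 * (k : ℕ) + 1, by have := k.2; omega⟩)
  else 0

/-- The Pfaffian of the principal minor of `A` indexed by the subset `S`,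
with rows and columns of the minor taken in increasing order of index. -/
noncomputable def pfMinor {n : ℕ} (A : Matrix (Fin n) (Fin n) ℝ) (S : Finset (Fin n)) : ℝ :=
  pfaffian (Matrix.of fun p q : Fin S.card =>
    A ((S.orderIsoOfFin rfl p : S) : Fin n) ((S.orderIsoOfFin rfl q : S) : Fin n))


/-- A **twisted Pfaffian map** on subsets of `{1,…,n}` (with real values):
it is not identically zero, any two sets with nonzero value have cardinalities of
equal parity, and it satisfies the Pfaffian exchange relation: whenever
`A Δ B = {i₁ < … < i_l}`, `∑_{j=1}^l (−1)^j p(A Δ {i_j}) p(B Δ {i_j}) = 0`. -/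
def IsTwistedPfaffianMap {n : ℕ} (p : Finset (Fin n) → ℝ) : Prop :=
  (∃ S, p S ≠ 0) ∧
  (∀ A B : Finset (Fin n), p A ≠ 0 → p B ≠ 0 → A.card % 2 = B.card % 2) ∧
  (∀ A B : Finset (Fin n),
    ∑ j : Fin (symmDiff A B).card,
      (-1 : ℝ) ^ ((j : ℕ) + 1) *
        p (symmDiff A {((symmDiff A B).orderIsoOfFin rfl j : Fin n)}) *
        p (symmDiff B {((symmDiff A B).orderIsoOfFin rfl j : Fin n)}) = 0)

/-- An **oriented even Δ-matroid** on `I = {1,…,n}`: a map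
`p : 2^I → {+1, −1, 0}` such that (1) `p` is not identically zero; (2) any two sets
with nonzero value have cardinalities of equal parity; (3) whenever
`A Δ B = {i₁ < … < i_l}` and, for some `w ∈ {+1, −1}`, all the quantities
`κ_j = w (−1)^j p(A Δ {i_j}) p(B Δ {i_j})` are nonnegative, they are all zero. -/
def IsOrientedEvenDeltaMatroid {n : ℕ} (p : Finset (Fin n) → SignType) : Prop :=
  (∃ S, p S ≠ 0) ∧
  (∀ A B : Finset (Fin n), p A ≠ 0 → p B ≠ 0 → A.card % 2 = B.card % 2) ∧
  (∀ A B : Finset (Fin n), ∀ w : SignType, (w = 1 ∨ w = -1) →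
    (∀ j : Fin (symmDiff A B).card,
      0 ≤ w * (-1 : SignType) ^ ((j : ℕ) + 1) *
        p (symmDiff A {((symmDiff A B).orderIsoOfFin rfl j : Fin n)}) *
        p (symmDiff B {((symmDiff A B).orderIsoOfFin rfl j : Fin n)})) →
    (∀ j : Fin (symmDiff A B).card,
      w * (-1 : SignType) ^ ((j : ℕ) + 1) *
        p (symmDiff A {((symmDiff A B).orderIsoOfFin rfl j : Fin n)}) *
        p (symmDiff B {((symmDiff A B).orderIsoOfFin rfl j : Fin n)}) = 0))

lemma sd_cancel' {n : ℕ} (A B c : Finset (Fin n)) :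
    symmDiff (symmDiff A c) (symmDiff B c) = symmDiff A B := by
  ext x; simp [Finset.mem_symmDiff]; tauto

lemma sd_pair' {n : ℕ} (i j : Fin n) (h : i ≠ j) :
    symmDiff ({i} : Finset (Fin n)) {j} = {i, j} := by
  ext x; simp [Finset.mem_symmDiff]
  constructor <;> intro hx <;>
    [tauto; (rcases hx with h1 | h1 <;> subst h1 <;> simp [h, h.symm])]

lemma exchange_aux {n : ℕ} (p : Finset (Fin n) → ℝ) (hp : IsTwistedPfaffianMap p) :
    ∀ A : Finset (Fin n), p A ≠ 0 → ∀ B : Finset (Fin n), p B ≠ 0 →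
      ∀ i ∈ symmDiff A B, ∃ j ∈ symmDiff B A, p (symmDiff A {i, j}) ≠ 0 := by
  intro A hA B hB i hi
  obtain ⟨-, -, hrel⟩ := hp
  have hsum := hrel (symmDiff A {i}) (symmDiff B {i})
  have hS : symmDiff (symmDiff A {i}) (symmDiff B {i}) = symmDiff A B :=
    sd_cancel' A B {i}
  set S := symmDiff (symmDiff A {i}) (symmDiff B {i}) with hSdef
  have hi' : i ∈ S := by rw [hS]; exact hi
  set e : Fin S.card → Fin n := fun j => ((S.orderIsoOfFin rfl j : S) : Fin n) with he
  -- the index hitting i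
  set j0 : Fin S.card := (S.orderIsoOfFin rfl).symm ⟨i, hi'⟩ with hj0
  have hej0 : e j0 = i := by
    simp only [he, hj0]
    exact congrArg Subtype.val ((S.orderIsoOfFin rfl).apply_symm_apply ⟨i, hi'⟩)
  set f : Fin S.card → ℝ := fun j =>
    (-1 : ℝ) ^ ((j : ℕ) + 1) * p (symmDiff (symmDiff A {i}) {e j}) *
      p (symmDiff (symmDiff B {i}) {e j}) with hf
  have hsum' : ∑ j, f j = 0 := hsum
  have hfj0 : f j0 ≠ 0 := by
    have h1 : symmDiff (symmDiff A {i}) {e j0} = A := by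
      rw [hej0]; exact symmDiff_symmDiff_cancel_right {i} A
    have h2 : symmDiff (symmDiff B {i}) {e j0} = B := by
      rw [hej0]; exact symmDiff_symmDiff_cancel_right {i} B
    simp only [hf, h1, h2]
    positivity
  -- there must be another nonzero term
  have : ∃ j1, j1 ≠ j0 ∧ f j1 ≠ 0 := by
    by_contra hcon
    push_neg at hcon
    have : ∑ j, f j = f j0 := Finset.sum_eq_single_of_mem j0 (Finset.mem_univ _)
      (fun b _ hb => hcon b hb)
    exact hfj0 (this ▸ hsum')
  obtain ⟨j1, hj1ne, hfj1⟩ := this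
  have hjne : e j1 ≠ i := by
    rw [← hej0]
    intro hcontra
    exact hj1ne ((S.orderIsoOfFin rfl).injective (Subtype.coe_injective hcontra))
  refine ⟨e j1, ?_, ?_⟩
  · rw [symmDiff_comm, ← hS]
    exact (S.orderIsoOfFin rfl j1).2
  · have hpair : ({i, e j1} : Finset (Fin n)) = symmDiff ({i} : Finset (Fin n)) {e j1} :=
      (sd_pair' i (e j1) (Ne.symm hjne)).symm
    rw [hpair, ← symmDiff_assoc]
    intro h0
    apply hfj1
    simp [hf, h0]

/-- Let `p` be a (nonzero) twisted Pfaffian map on subsets of `I = {1,…,n}`.  Then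
the collection `ℬ = {S : p S ≠ 0}` is a Δ-matroid (it satisfies the symmetric
exchange axiom), and moreover `sign ∘ p` is an oriented even Δ-matroid. -/
theorem twistedPfaffianMap_deltaMatroid_and_oriented {n : ℕ}
    (p : Finset (Fin n) → ℝ) (hp : IsTwistedPfaffianMap p) :
    (∀ A : Finset (Fin n), p A ≠ 0 → ∀ B : Finset (Fin n), p B ≠ 0 →
      ∀ i ∈ symmDiff A B, ∃ j ∈ symmDiff B A, p (symmDiff A {i, j}) ≠ 0) ∧
    IsOrientedEvenDeltaMatroid (fun S => SignType.sign (p S)) := by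
  obtain ⟨⟨S0, hS0⟩, hpar, hrel⟩ := id hp
  refine ⟨exchange_aux p hp, ⟨S0, by simpa using hS0⟩, ?_, ?_⟩
  · intro A B hA hB
    exact hpar A B (by simpa using hA) (by simpa using hB)
  · intro A B w hw hnn
    set S := symmDiff A B with hSdef
    set e : Fin S.card → Fin n := fun j => ((S.orderIsoOfFin rfl j : S) : Fin n) with he
    set f : Fin S.card → ℝ := fun j =>
      (-1 : ℝ) ^ ((j : ℕ) + 1) * p (symmDiff A {e j}) * p (symmDiff B {e j}) with hf
    have hsum : ∑ j, f j = 0 := hrel A B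
    have hwR : ((w : ℝ)) ≠ 0 := by rcases hw with h | h <;> subst h <;> norm_num
    have hsw : SignType.sign ((w : ℝ)) = w := by
      rcases hw with h | h <;> subst h <;> simp
    have hsign : ∀ j : Fin S.card,
        w * (-1 : SignType) ^ ((j : ℕ) + 1) * SignType.sign (p (symmDiff A {e j})) *
          SignType.sign (p (symmDiff B {e j})) = SignType.sign ((w : ℝ) * f j) := by
      intro j
      rw [hf]
      simp only [← mul_assoc, sign_mul, hsw, sign_pow]
      norm_num
    have hnn' : ∀ j : Fin S.card, 0 ≤ (w : ℝ) * f j := by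
      intro j
      rw [← sign_nonneg_iff, ← hsign j]
      exact hnn j
    have hzero : ∀ j ∈ Finset.univ, (w : ℝ) * f j = 0 := by
      rw [← Finset.sum_eq_zero_iff_of_nonneg (fun j _ => hnn' j)]
      rw [← Finset.mul_sum, hsum, mul_zero]
    intro j
    rw [hsign j, hzero j (Finset.mem_univ j), sign_zero]
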